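/- Every strongly homogeneous (separable metrizable) space is homogeneous. -/

import Mathlib

open Set TopologicalSpace Topology Filter

section Aux

attribute [local instance] Classical.propDecidable
set_option linter.unusedSectionVars false

variable {X : Type*} [TopologicalSpace X]

/-- The map glued from ring homeomorphisms: on each "ring" `U n \ U (n+1)` use `e n`,
elsewhere (i.e. at the center) send to `y`. -/
noncomputable def ringMap (U V : ℕ → Set X)
    (e : ∀ n, ↥(U n \ U (n+1)) ≃ₜ ↥(V n \ V (n+1))) (y : X) : X → X :=
  fun z =>
    if hz : ∃ n, z ∈ U n \ U (n + 1) then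
      ((e (Nat.find hz)) ⟨z, Nat.find_spec hz⟩ : X)
    else y

theorem ring_unique {U : ℕ → Set X} (hU : Antitone U) {z : X} {n m : ℕ}
    (hn : z ∈ U n \ U (n + 1)) (hm : z ∈ U m \ U (m + 1)) : n = m := by
  by_contra h
  rcases Nat.lt_or_ge n m with hlt | hge
  · exact hn.2 (hU (Nat.succ_le_of_lt hlt) hm.1)
  · exact hm.2 (hU (Nat.succ_le_of_lt (lt_of_le_of_ne hge (Ne.symm h))) hn.1)

theorem ringMap_eq_of_mem {U V : ℕ → Set X}
    {e : ∀ n, ↥(U n \ U (n+1)) ≃ₜ ↥(V n \ V (n+1))} {y : X}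
    (hU : Antitone U) {z : X} {n : ℕ} (h : z ∈ U n \ U (n + 1)) :
    ringMap U V e y z = ((e n) ⟨z, h⟩ : X) := by
  have hz : ∃ m, z ∈ U m \ U (m + 1) := ⟨n, h⟩
  have hfind : Nat.find hz = n := ring_unique hU (Nat.find_spec hz) h
  simp only [ringMap, dif_pos hz]
  subst hfind
  rfl

theorem ringMap_eq_of_forall {U V : ℕ → Set X}
    {e : ∀ n, ↥(U n \ U (n+1)) ≃ₜ ↥(V n \ V (n+1))} {y : X}
    {z : X} (h : ∀ n, z ∈ U n) : ringMap U V e y z = y := by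
  have : ¬ ∃ n, z ∈ U n \ U (n + 1) := by
    rintro ⟨n, hn⟩; exact hn.2 (h (n + 1))
  simp only [ringMap, dif_neg this]

theorem mem_all_of_no_ring {U : ℕ → Set X} (hU0 : U 0 = univ)
    {z : X} (h : ¬ ∃ n, z ∈ U n \ U (n + 1)) : ∀ n, z ∈ U n := by
  push_neg at h
  intro n
  induction n with
  | zero => rw [hU0]; exact mem_univ z
  | succ k ih =>
    by_contra hk
    exact h k ⟨ih, hk⟩

theorem ringMap_leftInv {U V : ℕ → Set X}
    {e : ∀ n, ↥(U n \ U (n+1)) ≃ₜ ↥(V n \ V (n+1))} {x y : X}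
    (hU : Antitone U) (hV : Antitone V) (hU0 : U 0 = univ)
    (hsing : ∀ z, (∀ n, z ∈ U n) → z = x)
    (hx : ∀ n, x ∈ U n) (hy : ∀ n, y ∈ V n) (z : X) :
    ringMap V U (fun n => (e n).symm) x (ringMap U V e y z) = z := by
  by_cases hz : ∃ n, z ∈ U n \ U (n + 1)
  · obtain ⟨n, hn⟩ := hz
    rw [ringMap_eq_of_mem hU hn]
    have hw : ((e n) ⟨z, hn⟩ : X) ∈ V n \ V (n + 1) := ((e n) ⟨z, hn⟩).2
    rw [ringMap_eq_of_mem hV hw]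
    have : (⟨((e n) ⟨z, hn⟩ : X), hw⟩ : ↥(V n \ V (n+1))) = (e n) ⟨z, hn⟩ :=
      Subtype.ext rfl
    rw [this, Homeomorph.symm_apply_apply]
  · have hall := mem_all_of_no_ring hU0 hz
    have hzx : z = x := hsing z hall
    subst hzx
    rw [ringMap_eq_of_forall hx, ringMap_eq_of_forall hy]

theorem ringMap_continuous {U V : ℕ → Set X}
    {e : ∀ n, ↥(U n \ U (n+1)) ≃ₜ ↥(V n \ V (n+1))} {x y : X}
    (hU : Antitone U) (hV : Antitone V) (hU0 : U 0 = univ)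
    (hUclopen : ∀ n, IsClopen (U n))
    (hsing : ∀ z, (∀ n, z ∈ U n) → z = x)
    (hx : ∀ n, x ∈ U n)
    (hVbasis : ∀ W ∈ 𝓝 y, ∃ n, V n ⊆ W) :
    Continuous (ringMap U V e y) := by
  rw [continuous_iff_continuousAt]
  intro z
  by_cases hz : ∃ n, z ∈ U n \ U (n + 1)
  · obtain ⟨n, hn⟩ := hz
    have hopen : IsOpen (U n \ U (n + 1)) :=
      ((hUclopen n).diff (hUclopen (n + 1))).isOpen
    have hmem : (U n \ U (n + 1)) ∈ 𝓝 z := hopen.mem_nhds hn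
    have hcont : ContinuousOn (ringMap U V e y) (U n \ U (n + 1)) := by
      rw [continuousOn_iff_continuous_restrict]
      have heq : (U n \ U (n + 1)).domRestrict (ringMap U V e y) =
          fun w : ↥(U n \ U (n + 1)) => ((e n) w : X) := by
        funext w
        rw [restrict_apply, ringMap_eq_of_mem hU w.2]
      rw [heq]
      exact continuous_subtype_val.comp (e n).continuous
    exact hcont.continuousAt hmem
  · have hall := mem_all_of_no_ring hU0 hz
    have hzx : z = x := hsing z hall
    subst hzx
    have hfy : ringMap U V e y z = y := ringMap_eq_of_forall hall
    unfold ContinuousAt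
    rw [hfy, tendsto_def]
    intro W hW
    obtain ⟨n, hVn⟩ := hVbasis W hW
    have hUn : U n ∈ 𝓝 z := (hUclopen n).isOpen.mem_nhds (hall n)
    refine Filter.mem_of_superset hUn ?_
    intro w hw
    by_cases hw' : ∃ m, w ∈ U m \ U (m + 1)
    · obtain ⟨m, hm⟩ := hw'
      have hnm : n ≤ m := by
        by_contra hlt
        push_neg at hlt
        exact hm.2 (hU (Nat.succ_le_of_lt hlt) hw)
      have heq : ringMap U V e y w = ((e m) ⟨w, hm⟩ : X) := ringMap_eq_of_mem hU hm
      have hmemV : ((e m) ⟨w, hm⟩ : X) ∈ V m \ V (m + 1) := ((e m) ⟨w, hm⟩).2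
      simp only [mem_preimage, heq]
      exact hVn (hV hnm hmemV.1)
    · have heq : ringMap U V e y w = y :=
        ringMap_eq_of_forall (mem_all_of_no_ring hU0 hw')
      simp only [mem_preimage, heq]
      exact mem_of_mem_nhds hW

end Aux

section Chain

attribute [local instance] Classical.propDecidable

theorem exists_chain {X : Type*} [TopologicalSpace X] [T1Space X]
    [FirstCountableTopology X]
    (hbasis : IsTopologicalBasis {s : Set X | IsClopen s})
    (hni : ∀ C : Set X, IsClopen C → ∀ p ∈ C, ∃ z ∈ C, z ≠ p) (x : X) :
    ∃ U : ℕ → Set X, U 0 = univ ∧ Antitone U ∧ (∀ n, IsClopen (U n)) ∧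
      (∀ n, x ∈ U n) ∧ (∀ n, (U n \ U (n + 1)).Nonempty) ∧
      (∀ W ∈ 𝓝 x, ∃ n, U n ⊆ W) ∧ (∀ z, (∀ n, z ∈ U n) → z = x) := by
  obtain ⟨s, hs⟩ := (𝓝 x).exists_antitone_basis
  have key : ∀ (n : ℕ) (C : Set X), IsClopen C → x ∈ C →
      ∃ D : Set X, IsClopen D ∧ x ∈ D ∧ D ⊆ C ∧ D ⊆ s n ∧ (C \ D).Nonempty := by
    intro n C hC hxC
    obtain ⟨z, hzC, hzx⟩ := hni C hC x hxC
    obtain ⟨P, hP, hxP, hPz⟩ := hbasis.exists_subset_of_mem_open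
      (show x ∈ ({z}ᶜ : Set X) from fun h => hzx (mem_singleton_iff.mp h).symm)
      isOpen_compl_singleton
    obtain ⟨Q, hQ, hxQ, hQs⟩ := hbasis.mem_nhds_iff.mp (hs.mem n)
    refine ⟨C ∩ P ∩ Q, ((hC.inter hP).inter hQ), ⟨⟨hxC, hxP⟩, hxQ⟩,
      fun w hw => hw.1.1, fun w hw => hQs hw.2, ⟨z, hzC, ?_⟩⟩
    rintro ⟨⟨-, hzP⟩, -⟩
    exact hPz hzP rfl
  choose D hD1 hD2 hD3 hD4 hD5 using key
  let U : ℕ → {C : Set X // IsClopen C ∧ x ∈ C} := fun n =>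
    Nat.rec ⟨univ, isClopen_univ, mem_univ x⟩
      (fun n p => ⟨D n p.1 p.2.1 p.2.2, hD1 n p.1 p.2.1 p.2.2, hD2 n p.1 p.2.1 p.2.2⟩) n
  have hsucc : ∀ n, (U (n + 1)).1 = D n (U n).1 (U n).2.1 (U n).2.2 := fun n => rfl
  have hanti : Antitone fun n => (U n).1 := by
    apply antitone_nat_of_succ_le
    intro n
    rw [hsucc n]
    exact hD3 n (U n).1 (U n).2.1 (U n).2.2
  have hsub : ∀ n, (U (n + 1)).1 ⊆ s n := by
    intro n
    rw [hsucc n]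
    exact hD4 n (U n).1 (U n).2.1 (U n).2.2
  refine ⟨fun n => (U n).1, rfl, hanti, fun n => (U n).2.1, fun n => (U n).2.2,
    fun n => ?_, fun W hW => ?_, fun z hz => ?_⟩
  · show ((U n).1 \ (U (n + 1)).1).Nonempty
    rw [hsucc n]
    exact hD5 n (U n).1 (U n).2.1 (U n).2.2
  · obtain ⟨n, hn⟩ := hs.mem_iff.mp hW
    exact ⟨n + 1, (hsub n).trans hn⟩
  · by_contra hzx
    have : ({z}ᶜ : Set X) ∈ 𝓝 x := isOpen_compl_singleton.mem_nhds
      (fun h => hzx (mem_singleton_iff.mp h).symm)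
    obtain ⟨n, hn⟩ := hs.mem_iff.mp this
    exact (hn ((hsub n) (hz (n + 1)))) rfl

end Chain

/-- Every strongly homogeneous separable metrizable space is homogeneous: if `X` is
zero-dimensional (non-empty with a base of clopen sets) and every non-empty clopen
subspace of `X` is homeomorphic to `X`, then for all `x y : X` there is a
self-homeomorphism of `X` sending `x` to `y`. -/
theorem statement8 {X : Type*} [TopologicalSpace X]
    [TopologicalSpace.MetrizableSpace X] [TopologicalSpace.SeparableSpace X]
    [Nonempty X]
    (hbasis : TopologicalSpace.IsTopologicalBasis {s : Set X | IsClopen s})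
    (hstrong : ∀ U : Set X, IsClopen U → U.Nonempty → Nonempty (↥U ≃ₜ X)) :
    ∀ x y : X, ∃ h : X ≃ₜ X, h x = y := by
  letI : MetricSpace X := TopologicalSpace.metrizableSpaceMetric X
  intro x y
  by_cases hsub : ∀ a b : X, a = b
  · exact ⟨Homeomorph.refl X, hsub x y⟩
  push_neg at hsub
  obtain ⟨a, b, hab⟩ := hsub
  -- no clopen subset with a point is a "singleton at p"
  have hni : ∀ C : Set X, IsClopen C → ∀ p ∈ C, ∃ z ∈ C, z ≠ p := by
    intro C hC p hp
    obtain ⟨e⟩ := hstrong C hC ⟨p, hp⟩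
    by_cases h : (e.symm a : X) = p
    · refine ⟨e.symm b, (e.symm b).2, fun hb => ?_⟩
      apply hab
      have : e.symm a = e.symm b := Subtype.ext (h.trans hb.symm)
      have := congrArg e this
      simpa using this
    · exact ⟨e.symm a, (e.symm a).2, h⟩
  obtain ⟨U, hU0, hUanti, hUclopen, hUx, hUne, hUbasis, hUsing⟩ :=
    exists_chain hbasis hni x
  obtain ⟨V, hV0, hVanti, hVclopen, hVy, hVne, hVbasis, hVsing⟩ :=
    exists_chain hbasis hni y
  -- homeomorphisms between the rings
  have ering : ∀ n, Nonempty (↥(U n \ U (n + 1)) ≃ₜ ↥(V n \ V (n + 1))) := by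
    intro n
    obtain ⟨eU⟩ := hstrong _ ((hUclopen n).diff (hUclopen (n + 1))) (hUne n)
    obtain ⟨eV⟩ := hstrong _ ((hVclopen n).diff (hVclopen (n + 1))) (hVne n)
    exact ⟨eU.trans eV.symm⟩
  let e : ∀ n, ↥(U n \ U (n + 1)) ≃ₜ ↥(V n \ V (n + 1)) := fun n => (ering n).some
  let f := ringMap U V e y
  let g := ringMap V U (fun n => (e n).symm) x
  have hlinv : ∀ z, g (f z) = z :=
    ringMap_leftInv hUanti hVanti hU0 hUsing hUx hVy
  have hesymm : (fun n => ((e n).symm).symm) = e :=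
    funext fun n => Homeomorph.symm_symm (e n)
  have hrinv : ∀ z, f (g z) = z := by
    intro z
    have h2 := ringMap_leftInv (e := fun n => (e n).symm)
      hVanti hUanti hV0 hVsing hVy hUx z
    rwa [hesymm] at h2
  have hfc : Continuous f :=
    ringMap_continuous hUanti hVanti hU0 hUclopen hUsing hUx hVbasis
  have hgc : Continuous g :=
    ringMap_continuous hVanti hUanti hV0 hVclopen hVsing hVy hUbasis
  refine ⟨⟨⟨f, g, hlinv, hrinv⟩, hfc, hgc⟩, ?_⟩
  exact ringMap_eq_of_forall hUx
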